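/- ∘-bisimilarity is an equivalence relation on pointed models: it is reflexive ((M,s) ≃∘ (M,s)), symmetric (if (M,s) ≃∘ (M',s') then (M',s') ≃∘ (M,s)), and transitive (if (M,s) ≃∘ (N,t) and (N,t) ≃∘ (O,u) then (M,s) ≃∘ (O,u)). -/

import Mathlib

/-- A Kripke model. -/
structure Model (W : Type) where
  R : W → W → Prop
  V : ℕ → W → Prop

/-- Z is a ∘-bisimulation on the model M: Z is nonempty and whenever sZs',
(Inv), (∘-Forth) and (∘-Back) hold. -/
def isCircBisim {W : Type} (M : Model W) (Z : W → W → Prop) : Prop :=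
  (∃ a b, Z a b) ∧
  ∀ s s', Z s s' →
    ((∀ p, M.V p s ↔ M.V p s') ∧
     (∀ t, M.R s t → ¬ Z s t → ∃ t', M.R s' t' ∧ Z t t') ∧
     (∀ t', M.R s' t' → ¬ Z s' t' → ∃ t, M.R s t ∧ Z t t'))

/-- The disjoint union of two models. -/
def dsum {W W' : Type} (M : Model W) (M' : Model W') : Model (W ⊕ W') where
  R x y :=
    match x, y with
    | Sum.inl a, Sum.inl b => M.R a b
    | Sum.inr a, Sum.inr b => M'.R a b
    | _, _ => False
  V p x :=
    match x with
    | Sum.inl a => M.V p a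
    | Sum.inr a => M'.V p a

/-- (M,s) and (M',s') are ∘-bisimilar: some ∘-bisimulation on the disjoint
union of M and M' relates s to s'. -/
def circBisimilar {W W' : Type} (M : Model W) (s : W) (M' : Model W') (s' : W') : Prop :=
  ∃ Z, isCircBisim (dsum M M') Z ∧ Z (Sum.inl s) (Sum.inr s')
section Aux

variable {W U : Type}

/-- The three ∘-bisimulation clauses, without the nonemptiness requirement. -/
def preBisim (M : Model W) (Z : W → W → Prop) : Prop :=
  ∀ s s', Z s s' →
    ((∀ p, M.V p s ↔ M.V p s') ∧
     (∀ t, M.R s t → ¬ Z s t → ∃ t', M.R s' t' ∧ Z t t') ∧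
     (∀ t', M.R s' t' → ¬ Z s' t' → ∃ t, M.R s t ∧ Z t t'))

lemma preBisim_symm {M : Model W} {Z : W → W → Prop} (h : preBisim M Z) :
    preBisim M (fun x y => Z x y ∨ Z y x) := by
  rintro s s' (hss | hss)
  · obtain ⟨h1, h2, h3⟩ := h s s' hss
    refine ⟨h1, ?_, ?_⟩
    · intro t hR hn
      obtain ⟨t', hR', hz⟩ := h2 t hR (fun hz => hn (Or.inl hz))
      exact ⟨t', hR', Or.inl hz⟩
    · intro t' hR hn
      obtain ⟨t, hR', hz⟩ := h3 t' hR (fun hz => hn (Or.inl hz))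
      exact ⟨t, hR', Or.inl hz⟩
  · obtain ⟨h1, h2, h3⟩ := h s' s hss
    refine ⟨fun p => (h1 p).symm, ?_, ?_⟩
    · intro t hR hn
      obtain ⟨t', hR', hz⟩ := h3 t hR (fun hz => hn (Or.inl hz))
      exact ⟨t', hR', Or.inr hz⟩
    · intro t' hR hn
      obtain ⟨t, hR', hz⟩ := h2 t' hR (fun hz => hn (Or.inl hz))
      exact ⟨t, hR', Or.inr hz⟩

lemma preBisim_union {M : Model W} {Z₁ Z₂ : W → W → Prop}
    (h1 : preBisim M Z₁) (h2 : preBisim M Z₂) :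
    preBisim M (fun x y => Z₁ x y ∨ Z₂ x y) := by
  rintro s s' (hss | hss)
  · obtain ⟨ha, hb, hc⟩ := h1 s s' hss
    refine ⟨ha, ?_, ?_⟩
    · intro t hR hn
      obtain ⟨t', hR', hz⟩ := hb t hR (fun hz => hn (Or.inl hz))
      exact ⟨t', hR', Or.inl hz⟩
    · intro t' hR hn
      obtain ⟨t, hR', hz⟩ := hc t' hR (fun hz => hn (Or.inl hz))
      exact ⟨t, hR', Or.inl hz⟩
  · obtain ⟨ha, hb, hc⟩ := h2 s s' hss
    refine ⟨ha, ?_, ?_⟩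
    · intro t hR hn
      obtain ⟨t', hR', hz⟩ := hb t hR (fun hz => hn (Or.inr hz))
      exact ⟨t', hR', Or.inr hz⟩
    · intro t' hR hn
      obtain ⟨t, hR', hz⟩ := hc t' hR (fun hz => hn (Or.inr hz))
      exact ⟨t, hR', Or.inr hz⟩

lemma preBisim_transGen {M : Model W} {Z : W → W → Prop}
    (h : preBisim M Z) (hs : ∀ a b, Z a b → Z b a) :
    preBisim M (Relation.TransGen Z) := by
  have tsymm : ∀ a b, Relation.TransGen Z a b → Relation.TransGen Z b a := by
    intro a b hab
    induction hab with
    | single h1 => exact .single (hs _ _ h1)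
    | tail _ h2 ih => exact .head (hs _ _ h2) ih
  have claim : ∀ s s', Relation.TransGen Z s s' → ∀ t, M.R s t →
      Relation.TransGen Z s t ∨ ∃ t', M.R s' t' ∧ Relation.TransGen Z t t' := by
    intro s s' hss
    induction hss using Relation.TransGen.head_induction_on with
    | @single a h1 =>
      intro t hR
      by_cases hz : Z a t
      · exact Or.inl (.single hz)
      · obtain ⟨t', hR', hz'⟩ := ((h _ _ h1).2.1) t hR hz
        exact Or.inr ⟨t', hR', .single hz'⟩
    | @head a c h1 h2 ih =>
      intro t hR
      by_cases hz : Z a t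
      · exact Or.inl (.single hz)
      · obtain ⟨t₁, hR₁, hz₁⟩ := ((h _ _ h1).2.1) t hR hz
        rcases ih t₁ hR₁ with hcase | ⟨t₂, hR₂, hz₂⟩
        · exact Or.inl (((Relation.TransGen.head h1 hcase)).trans (.single (hs _ _ hz₁)))
        · exact Or.inr ⟨t₂, hR₂, Relation.TransGen.head hz₁ hz₂⟩
  intro s s' hss
  refine ⟨?_, ?_, ?_⟩
  · induction hss with
    | single h1 => exact (h _ _ h1).1
    | tail _ h2 ih => exact fun p => (ih p).trans ((h _ _ h2).1 p)
  · intro t hR hn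
    rcases claim s s' hss t hR with hc | hc
    · exact absurd hc hn
    · exact hc
  · intro t' hR hn
    rcases claim s' s (tsymm _ _ hss) t' hR with hc | ⟨t, hRt, hzt⟩
    · exact absurd hc hn
    · exact ⟨t, hRt, tsymm _ _ hzt⟩

/-- Pull back a ∘-bisimulation along an embedding of models whose image is
closed under successors. -/
lemma preBisim_pull {M : Model W} {N : Model U} (f : W → U)
    (hV : ∀ p x, M.V p x ↔ N.V p (f x))
    (hR : ∀ x y, M.R x y ↔ N.R (f x) (f y))
    (hC : ∀ x y, N.R (f x) y → ∃ y', y = f y')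
    {Z : U → U → Prop} (h : preBisim N Z) :
    preBisim M (fun x y => Z (f x) (f y)) := by
  intro s s' hss
  obtain ⟨h1, h2, h3⟩ := h (f s) (f s') hss
  refine ⟨fun p => (hV p s).trans ((h1 p).trans (hV p s').symm), ?_, ?_⟩
  · intro t hRt hn
    obtain ⟨t', hR', hz⟩ := h2 (f t) ((hR s t).1 hRt) hn
    obtain ⟨t'', rfl⟩ := hC s' t' hR'
    exact ⟨t'', (hR s' t'').2 hR', hz⟩
  · intro t' hRt hn
    obtain ⟨t, hRtt, hz⟩ := h3 (f t') ((hR s' t').1 hRt) hn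
    obtain ⟨t'', rfl⟩ := hC s t hRtt
    exact ⟨t'', (hR s t'').2 hRtt, hz⟩

/-- Push forward a ∘-bisimulation along an injective embedding of models whose
image is closed under successors. -/
lemma preBisim_push {M : Model W} {N : Model U} (f : W → U)
    (hinj : Function.Injective f)
    (hV : ∀ p x, M.V p x ↔ N.V p (f x))
    (hR : ∀ x y, M.R x y ↔ N.R (f x) (f y))
    (hC : ∀ x y, N.R (f x) y → ∃ y', y = f y')
    {Z : W → W → Prop} (h : preBisim M Z) :
    preBisim N (fun x y => ∃ x' y', x = f x' ∧ y = f y' ∧ Z x' y') := by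
  rintro s s' ⟨a, b, rfl, rfl, hab⟩
  obtain ⟨h1, h2, h3⟩ := h a b hab
  refine ⟨fun p => ((hV p a).symm.trans ((h1 p).trans (hV p b))), ?_, ?_⟩
  · intro t hRt hn
    obtain ⟨t₀, rfl⟩ := hC a t hRt
    obtain ⟨t', hR', hz⟩ := h2 t₀ ((hR a t₀).2 hRt)
      (fun hz => hn ⟨a, t₀, rfl, rfl, hz⟩)
    exact ⟨f t', (hR b t').1 hR', t₀, t', rfl, rfl, hz⟩
  · intro t' hRt hn
    obtain ⟨t₀, rfl⟩ := hC b t' hRt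
    obtain ⟨t, hRtt, hz⟩ := h3 t₀ ((hR b t₀).2 hRt)
      (fun hz => hn ⟨b, t₀, rfl, rfl, hz⟩)
    exact ⟨f t, (hR a t).1 hRtt, t, t₀, rfl, rfl, hz⟩

end Aux

section Maps

variable {A B C : Type}

/-- Embedding of the second and third summands into a triple disjoint sum. -/
def inrMap : B ⊕ C → (A ⊕ B) ⊕ C := Sum.elim (fun b => Sum.inl (Sum.inr b)) Sum.inr

/-- Embedding of the first and third summands into a triple disjoint sum. -/
def outMap : A ⊕ C → (A ⊕ B) ⊕ C := Sum.elim (fun a => Sum.inl (Sum.inl a)) Sum.inr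

lemma inrMap_inj : Function.Injective (inrMap (A := A) (B := B) (C := C)) := by
  rintro (b | c) (b' | c') h <;> simp_all [inrMap]

lemma outMap_inj : Function.Injective (outMap (A := A) (B := B) (C := C)) := by
  rintro (a | c) (a' | c') h <;> simp_all [outMap]

variable (M₁ : Model A) (M₂ : Model B) (M₃ : Model C)

lemma inl_V : ∀ p x, (dsum M₁ M₂).V p x ↔ (dsum (dsum M₁ M₂) M₃).V p (Sum.inl x) :=
  fun _ _ => Iff.rfl

lemma inl_R : ∀ x y, (dsum M₁ M₂).R x y ↔ (dsum (dsum M₁ M₂) M₃).R (Sum.inl x) (Sum.inl y) :=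
  fun _ _ => Iff.rfl

lemma inl_C : ∀ (x : A ⊕ B) y, (dsum (dsum M₁ M₂) M₃).R (Sum.inl x) y →
    ∃ y', y = Sum.inl y' := by
  rintro x (u | c) hR
  · exact ⟨u, rfl⟩
  · exact hR.elim

lemma inrMap_V : ∀ p x, (dsum M₂ M₃).V p x ↔ (dsum (dsum M₁ M₂) M₃).V p (inrMap x) := by
  rintro p (b | c) <;> exact Iff.rfl

lemma inrMap_R : ∀ x y, (dsum M₂ M₃).R x y ↔
    (dsum (dsum M₁ M₂) M₃).R (inrMap (A := A) x) (inrMap y) := by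
  rintro (b | c) (b' | c') <;> exact Iff.rfl

lemma inrMap_C : ∀ (x : B ⊕ C) y, (dsum (dsum M₁ M₂) M₃).R (inrMap x) y →
    ∃ y', y = inrMap y' := by
  rintro (b | c) y hR
  · rcases y with (a' | b') | c'
    · exact hR.elim
    · exact ⟨Sum.inl b', rfl⟩
    · exact hR.elim
  · rcases y with u | c'
    · rcases u with a' | b' <;> exact hR.elim
    · exact ⟨Sum.inr c', rfl⟩

lemma outMap_V : ∀ p x, (dsum M₁ M₃).V p x ↔ (dsum (dsum M₁ M₂) M₃).V p (outMap x) := by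
  rintro p (a | c) <;> exact Iff.rfl

lemma outMap_R : ∀ x y, (dsum M₁ M₃).R x y ↔
    (dsum (dsum M₁ M₂) M₃).R (outMap (B := B) x) (outMap y) := by
  rintro (a | c) (a' | c') <;> exact Iff.rfl

lemma outMap_C : ∀ (x : A ⊕ C) y, (dsum (dsum M₁ M₂) M₃).R (outMap x) y →
    ∃ y', y = outMap y' := by
  rintro (a | c) y hR
  · rcases y with (a' | b') | c'
    · exact ⟨Sum.inl a', rfl⟩
    · exact hR.elim
    · exact hR.elim
  · rcases y with u | c'
    · rcases u with a' | b' <;> exact hR.elim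
    · exact ⟨Sum.inr c', rfl⟩

end Maps


/-- ∘-bisimilarity is an equivalence relation on pointed models:
reflexive, symmetric and transitive. -/
theorem stmt10 :
    (∀ (W : Type) [Nonempty W] (M : Model W) (s : W), circBisimilar M s M s) ∧
    (∀ (W W' : Type) [Nonempty W] [Nonempty W'] (M : Model W) (M' : Model W')
        (s : W) (s' : W'),
        circBisimilar M s M' s' → circBisimilar M' s' M s) ∧
    (∀ (W₁ W₂ W₃ : Type) [Nonempty W₁] [Nonempty W₂] [Nonempty W₃]
        (M₁ : Model W₁) (M₂ : Model W₂) (M₃ : Model W₃)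
        (s₁ : W₁) (s₂ : W₂) (s₃ : W₃),
        circBisimilar M₁ s₁ M₂ s₂ → circBisimilar M₂ s₂ M₃ s₃ →
        circBisimilar M₁ s₁ M₃ s₃) := by
  refine ⟨?_, ?_, ?_⟩
  · -- reflexivity
    intro W _ M s
    refine ⟨fun x y => Sum.elim id id x = Sum.elim id id y,
      ⟨⟨Sum.inl s, Sum.inr s, rfl⟩, ?_⟩, rfl⟩
    rintro (a | a) (b | b) hab <;>
      simp only [Sum.elim_inl, Sum.elim_inr, id] at hab <;> subst hab
    · exact ⟨fun p => Iff.rfl, fun t hR _ => ⟨t, hR, rfl⟩, fun t hR _ => ⟨t, hR, rfl⟩⟩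
    · refine ⟨fun p => Iff.rfl, ?_, ?_⟩
      · rintro (c | c) hR _
        · exact ⟨Sum.inr c, hR, rfl⟩
        · exact hR.elim
      · rintro (c | c) hR _
        · exact hR.elim
        · exact ⟨Sum.inl c, hR, rfl⟩
    · refine ⟨fun p => Iff.rfl, ?_, ?_⟩
      · rintro (c | c) hR _
        · exact hR.elim
        · exact ⟨Sum.inl c, hR, rfl⟩
      · rintro (c | c) hR _
        · exact ⟨Sum.inr c, hR, rfl⟩
        · exact hR.elim
    · exact ⟨fun p => Iff.rfl, fun t hR _ => ⟨t, hR, rfl⟩, fun t hR _ => ⟨t, hR, rfl⟩⟩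
  · -- symmetry
    intro W W' _ _ M M' s s' h
    obtain ⟨Z, ⟨-, hpre⟩, hpt⟩ := h
    have hpre' : preBisim (dsum M M') Z := hpre
    have hZs := preBisim_symm hpre'
    have hpull := preBisim_pull (M := dsum M' M) (N := dsum M M')
      (Sum.elim Sum.inr Sum.inl)
      (by rintro p (a | a) <;> exact Iff.rfl)
      (by rintro (a | a) (b | b) <;> exact Iff.rfl)
      (by
        rintro x (w | w') _
        · exact ⟨Sum.inr w, rfl⟩
        · exact ⟨Sum.inl w', rfl⟩)
      hZs
    exact ⟨fun x y => Z (Sum.elim Sum.inr Sum.inl x) (Sum.elim Sum.inr Sum.inl y) ∨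
        Z (Sum.elim Sum.inr Sum.inl y) (Sum.elim Sum.inr Sum.inl x),
      ⟨⟨Sum.inl s', Sum.inr s, Or.inr hpt⟩, hpull⟩, Or.inr hpt⟩
  · -- transitivity
    intro W₁ W₂ W₃ _ _ _ M₁ M₂ M₃ s₁ s₂ s₃ hab hbc
    obtain ⟨Z₁, ⟨-, hp1⟩, h1pt⟩ := hab
    obtain ⟨Z₂, ⟨-, hp2⟩, h2pt⟩ := hbc
    have hp1' : preBisim (dsum M₁ M₂) Z₁ := hp1
    have hp2' : preBisim (dsum M₂ M₃) Z₂ := hp2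
    clear hp1 hp2
    have hP1 := preBisim_push (M := dsum M₁ M₂) (N := dsum (dsum M₁ M₂) M₃)
      Sum.inl Sum.inl_injective (inl_V M₁ M₂ M₃) (inl_R M₁ M₂ M₃) (inl_C M₁ M₂ M₃) hp1'
    have hP2 := preBisim_push (M := dsum M₂ M₃) (N := dsum (dsum M₁ M₂) M₃)
      inrMap inrMap_inj (inrMap_V M₁ M₂ M₃) (inrMap_R M₁ M₂ M₃) (inrMap_C M₁ M₂ M₃) hp2'
    have hPu := preBisim_union hP1 hP2
    have hPs := preBisim_symm hPu
    have hT := preBisim_transGen hPs (fun a b h => Or.symm h)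
    have hpull := preBisim_pull (M := dsum M₁ M₃) (N := dsum (dsum M₁ M₂) M₃)
      outMap (outMap_V M₁ M₂ M₃) (outMap_R M₁ M₂ M₃) (outMap_C M₁ M₂ M₃) hT
    set Pu : ((W₁ ⊕ W₂) ⊕ W₃) → ((W₁ ⊕ W₂) ⊕ W₃) → Prop := fun x y =>
      (∃ x' y', x = Sum.inl x' ∧ y = Sum.inl y' ∧ Z₁ x' y') ∨
      (∃ x' y', x = inrMap x' ∧ y = inrMap y' ∧ Z₂ x' y') with hPudef
    have step1 : (fun x y => Pu x y ∨ Pu y x)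
        (Sum.inl (Sum.inl s₁)) (Sum.inl (Sum.inr s₂)) :=
      Or.inl (Or.inl ⟨Sum.inl s₁, Sum.inr s₂, rfl, rfl, h1pt⟩)
    have step2 : (fun x y => Pu x y ∨ Pu y x)
        (Sum.inl (Sum.inr s₂)) (Sum.inr s₃) :=
      Or.inl (Or.inr ⟨Sum.inl s₂, Sum.inr s₃, rfl, rfl, h2pt⟩)
    have hptfin : Relation.TransGen (fun x y => Pu x y ∨ Pu y x)
        (outMap (B := W₂) (Sum.inl s₁)) (outMap (Sum.inr s₃)) :=
      Relation.TransGen.head step1 (Relation.TransGen.single step2)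
    exact ⟨fun x y => Relation.TransGen (fun x y => Pu x y ∨ Pu y x)
        (outMap x) (outMap y),
      ⟨⟨Sum.inl s₁, Sum.inr s₃, hptfin⟩, hpull⟩, hptfin⟩
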